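/- Suppose additionally that u + v > 0. Then there exists exactly one vector x ∈ ℝ^{S_m} satisfying Q x = 0 (where x is a column vector indexed by S_m) and the normalization x_{(1,0)} + x_{(1,1)} = 1. (The kernel of Q is one-dimensional, and holds a unique representative with the stated normalization.) -/

import Mathlib

open Finset

/-- The state space `S_m = {(n,r) : 1 ≤ n ≤ m, 0 ≤ r ≤ n}`, realised as a subtype of
`Fin (m+1) × Fin (m+1)` (first coordinate `n`, second coordinate `r`). -/
abbrev SmIdx (m : ℕ) := {p : Fin (m + 1) × Fin (m + 1) // 1 ≤ (p.1 : ℕ) ∧ (p.2 : ℕ) ≤ (p.1 : ℕ)}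

/-- The entry of the matrix `Q` in row `(n,r)` and column `(n',r')`:
`Q_{(n,r),(n,r-1)} = (n-r+1)v`, `Q_{(n,r),(n,r+1)} = (r+1)u`,
`Q_{(n,r),(n-1,r)} = (n-1-r)n/θ`, `Q_{(n,r),(n-1,r-1)} = (r-1)n/θ`,
`Q_{(n,r),(n,r)} = -n(n-1)/θ - (n-r)v - ru`, and all other entries zero. -/
noncomputable def QEnt (θ u v : ℝ) (n r n' r' : ℕ) : ℝ :=
  if n' = n ∧ r' + 1 = r then ((n : ℝ) - (r : ℝ) + 1) * v
  else if n' = n ∧ r' = r + 1 then ((r : ℝ) + 1) * u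
  else if n' + 1 = n ∧ r' = r then ((n : ℝ) - 1 - (r : ℝ)) * (n : ℝ) / θ
  else if n' + 1 = n ∧ r' + 1 = r then ((r : ℝ) - 1) * (n : ℝ) / θ
  else if n' = n ∧ r' = r then
    -((n : ℝ) * ((n : ℝ) - 1) / θ) - ((n : ℝ) - (r : ℝ)) * v - (r : ℝ) * u
  else 0

/-- The matrix `Q`, rows and columns indexed by `S_m`. -/
noncomputable def coalQ (m : ℕ) (θ u v : ℝ) : Matrix (SmIdx m) (SmIdx m) ℝ :=
  fun p q => QEnt θ u v (p.1.1 : ℕ) (p.1.2 : ℕ) (q.1.1 : ℕ) (q.1.2 : ℕ)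

/-- The state `(1,0) ∈ S_m`. -/
def st10 (m : ℕ) (hm : 1 ≤ m) : SmIdx m :=
  ⟨(⟨1, Nat.lt_succ_of_le hm⟩, ⟨0, Nat.succ_pos m⟩), le_refl 1, Nat.zero_le 1⟩

/-- The state `(1,1) ∈ S_m`. -/
def st11 (m : ℕ) (hm : 1 ≤ m) : SmIdx m :=
  ⟨(⟨1, Nat.lt_succ_of_le hm⟩, ⟨1, Nat.lt_succ_of_le hm⟩), le_refl 1, le_refl 1⟩

lemma sum_pt {N : ℕ} (P : ℕ → ℕ → Prop) [∀ a b, Decidable (P a b)] (f : ℕ → ℕ → ℝ)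
    (A B : ℕ) (hA : A < N) (hB : B < N) (h : ∀ a b, P a b ↔ a = A ∧ b = B) :
    (∑ a ∈ range N, ∑ b ∈ range N, if P a b then f a b else 0) = f A B := by
  have key : ∀ a ∈ range N, (∑ b ∈ range N, if P a b then f a b else 0)
      = if a = A then f a B else 0 := by
    intro a _
    by_cases ha : a = A
    · have h1 : ∀ b, (if P a b then f a b else 0) = if b = B then f a b else 0 := by
        intro b; by_cases hb : b = B <;> simp [h, ha, hb]
      simp only [h1]
      rw [Finset.sum_ite_eq' (range N) B (fun b => f a b), if_pos (mem_range.mpr hB), if_pos ha]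
    · have h1 : ∀ b, (if P a b then f a b else 0) = 0 := by
        intro b; simp [h, ha]
      simp [h1, ha]
  rw [Finset.sum_congr rfl key, Finset.sum_ite_eq' (range N) A (fun a => f a B),
    if_pos (mem_range.mpr hA)]

lemma sum_pt0 {N : ℕ} (P : ℕ → ℕ → Prop) [∀ a b, Decidable (P a b)] (f : ℕ → ℕ → ℝ)
    (h : ∀ a b, a < N → b < N → ¬ P a b) :
    (∑ a ∈ range N, ∑ b ∈ range N, if P a b then f a b else 0) = 0 := by
  apply Finset.sum_eq_zero; intro a ha
  apply Finset.sum_eq_zero; intro b hb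
  rw [if_neg (h a b (mem_range.mp ha) (mem_range.mp hb))]

noncomputable def Yext (m : ℕ) (x : SmIdx m → ℝ) (a b : ℕ) : ℝ :=
  if h : 1 ≤ a ∧ a ≤ m ∧ b ≤ a then
    x ⟨(⟨a, by omega⟩, ⟨b, by omega⟩), ⟨h.1, h.2.2⟩⟩ else 0

lemma Yext_eq {m : ℕ} (x : SmIdx m → ℝ) (p : SmIdx m) :
    Yext m x (p.1.1 : ℕ) (p.1.2 : ℕ) = x p := by
  have h : 1 ≤ (p.1.1 : ℕ) ∧ (p.1.1 : ℕ) ≤ m ∧ (p.1.2 : ℕ) ≤ (p.1.1 : ℕ) :=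
    ⟨p.2.1, Nat.lt_succ_iff.mp p.1.1.isLt, p.2.2⟩
  rw [Yext, dif_pos h]

lemma Yext_zero {m : ℕ} (x : SmIdx m → ℝ) {a b : ℕ} (h : ¬(1 ≤ a ∧ a ≤ m ∧ b ≤ a)) :
    Yext m x a b = 0 := dif_neg h

lemma sum_conv {m : ℕ} (f : ℕ → ℕ → ℝ)
    (hf : ∀ a b : ℕ, ¬(1 ≤ a ∧ a ≤ m ∧ b ≤ a) → f a b = 0) :
    (∑ q : SmIdx m, f (q.1.1 : ℕ) (q.1.2 : ℕ))
      = ∑ a ∈ range (m+1), ∑ b ∈ range (m+1), f a b := by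
  have h1 := Finset.sum_subtype
    (p := fun p : Fin (m+1) × Fin (m+1) => 1 ≤ (p.1 : ℕ) ∧ (p.2 : ℕ) ≤ (p.1 : ℕ))
    (F := inferInstance)
    (s := (univ : Finset (Fin (m+1) × Fin (m+1))).filter
      (fun p => 1 ≤ (p.1 : ℕ) ∧ (p.2 : ℕ) ≤ (p.1 : ℕ)))
    (by intro x; simp) (fun z : Fin (m+1) × Fin (m+1) => f (z.1 : ℕ) (z.2 : ℕ))
  rw [← h1]
  rw [Finset.sum_subset (Finset.filter_subset _ _)]
  · rw [Fintype.sum_prod_type]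
    rw [Fin.sum_univ_eq_sum_range (fun a => ∑ b : Fin (m+1), f a (b : ℕ))]
    apply Finset.sum_congr rfl; intro a _
    exact Fin.sum_univ_eq_sum_range (fun b => f a b) (m+1)
  · intro z _ hz
    simp only [mem_filter, mem_univ, true_and] at hz
    exact hf _ _ (fun hc => hz ⟨hc.1, hc.2.2⟩)

lemma QEnt_decomp (θ u v : ℝ) (n r a b : ℕ) :
    QEnt θ u v n r a b =
      (if a = n ∧ b + 1 = r then ((n:ℝ) - (r:ℝ) + 1) * v else 0)
    + (if a = n ∧ b = r + 1 then ((r:ℝ) + 1) * u else 0)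
    + (if a + 1 = n ∧ b = r then ((n:ℝ) - 1 - (r:ℝ)) * (n:ℝ) / θ else 0)
    + (if a + 1 = n ∧ b + 1 = r then ((r:ℝ) - 1) * (n:ℝ) / θ else 0)
    + (if a = n ∧ b = r then
        -((n:ℝ) * ((n:ℝ) - 1) / θ) - ((n:ℝ) - (r:ℝ)) * v - (r:ℝ) * u else 0) := by
  unfold QEnt
  split_ifs <;> first | ring1 | (exfalso; omega)

def mkSt (m n r : ℕ) (h1 : 1 ≤ n) (h2 : n ≤ m) (h3 : r ≤ n) : SmIdx m :=
  ⟨(⟨n, by omega⟩, ⟨r, by omega⟩), h1, h3⟩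

noncomputable def RowExpr (m : ℕ) (θ u v : ℝ) (x : SmIdx m → ℝ) (n r : ℕ) : ℝ :=
    (if 1 ≤ r then ((n:ℝ) - (r:ℝ) + 1) * v * Yext m x n (r-1) else 0)
  + ((r:ℝ) + 1) * u * Yext m x n (r+1)
  + ((n:ℝ) - 1 - (r:ℝ)) * (n:ℝ) / θ * Yext m x (n-1) r
  + (if 1 ≤ r then ((r:ℝ) - 1) * (n:ℝ) / θ * Yext m x (n-1) (r-1) else 0)
  + (-((n:ℝ) * ((n:ℝ) - 1) / θ) - ((n:ℝ) - (r:ℝ)) * v - (r:ℝ) * u) * Yext m x n r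

lemma mulVec_row (m : ℕ) (θ u v : ℝ) (x : SmIdx m → ℝ) (n r : ℕ)
    (h1 : 1 ≤ n) (h2 : n ≤ m) (h3 : r ≤ n) :
    (coalQ m θ u v).mulVec x (mkSt m n r h1 h2 h3) = RowExpr m θ u v x n r := by
  have conv1 : (coalQ m θ u v).mulVec x (mkSt m n r h1 h2 h3)
      = ∑ a ∈ range (m+1), ∑ b ∈ range (m+1), QEnt θ u v n r a b * Yext m x a b := by
    rw [← sum_conv (fun a b => QEnt θ u v n r a b * Yext m x a b)
      (fun a b h => by show QEnt θ u v n r a b * Yext m x a b = 0; rw [Yext_zero x h, mul_zero])]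
    show (∑ q : SmIdx m, coalQ m θ u v (mkSt m n r h1 h2 h3) q * x q) = _
    apply Finset.sum_congr rfl
    intro q _
    rw [Yext_eq]
    rfl
  rw [conv1]
  have expand : ∀ a b : ℕ, QEnt θ u v n r a b * Yext m x a b =
      (if a = n ∧ b + 1 = r then ((n:ℝ) - (r:ℝ) + 1) * v * Yext m x a b else 0)
    + (if a = n ∧ b = r + 1 then ((r:ℝ) + 1) * u * Yext m x a b else 0)
    + (if a + 1 = n ∧ b = r then ((n:ℝ) - 1 - (r:ℝ)) * (n:ℝ) / θ * Yext m x a b else 0)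
    + (if a + 1 = n ∧ b + 1 = r then ((r:ℝ) - 1) * (n:ℝ) / θ * Yext m x a b else 0)
    + (if a = n ∧ b = r then
        (-((n:ℝ) * ((n:ℝ) - 1) / θ) - ((n:ℝ) - (r:ℝ)) * v - (r:ℝ) * u) * Yext m x a b else 0) := by
    intro a b
    rw [QEnt_decomp θ u v n r a b]
    split_ifs <;> ring
  simp only [expand, Finset.sum_add_distrib]
  have E1 : (∑ a ∈ range (m+1), ∑ b ∈ range (m+1),
      if a = n ∧ b + 1 = r then ((n:ℝ) - (r:ℝ) + 1) * v * Yext m x a b else 0)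
      = (if 1 ≤ r then ((n:ℝ) - (r:ℝ) + 1) * v * Yext m x n (r-1) else 0) := by
    by_cases hr : 1 ≤ r
    · rw [if_pos hr]
      exact sum_pt _ (fun a b => ((n:ℝ) - (r:ℝ) + 1) * v * Yext m x a b) n (r-1)
        (by omega) (by omega) (fun a b => by omega)
    · rw [if_neg hr]
      exact sum_pt0 _ _ (fun a b _ _ => by omega)
  have E2 : (∑ a ∈ range (m+1), ∑ b ∈ range (m+1),
      if a = n ∧ b = r + 1 then ((r:ℝ) + 1) * u * Yext m x a b else 0)
      = ((r:ℝ) + 1) * u * Yext m x n (r+1) := by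
    by_cases hr : r + 1 ≤ m
    · exact sum_pt _ (fun a b => ((r:ℝ) + 1) * u * Yext m x a b) n (r+1)
        (by omega) (by omega) (fun a b => by omega)
    · rw [Yext_zero x (by omega : ¬(1 ≤ n ∧ n ≤ m ∧ r + 1 ≤ n)), mul_zero]
      exact sum_pt0 _ _ (fun a b _ _ => by omega)
  have E3 : (∑ a ∈ range (m+1), ∑ b ∈ range (m+1),
      if a + 1 = n ∧ b = r then ((n:ℝ) - 1 - (r:ℝ)) * (n:ℝ) / θ * Yext m x a b else 0)
      = ((n:ℝ) - 1 - (r:ℝ)) * (n:ℝ) / θ * Yext m x (n-1) r := by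
    exact sum_pt _ (fun a b => ((n:ℝ) - 1 - (r:ℝ)) * (n:ℝ) / θ * Yext m x a b) (n-1) r
      (by omega) (by omega) (fun a b => by omega)
  have E4 : (∑ a ∈ range (m+1), ∑ b ∈ range (m+1),
      if a + 1 = n ∧ b + 1 = r then ((r:ℝ) - 1) * (n:ℝ) / θ * Yext m x a b else 0)
      = (if 1 ≤ r then ((r:ℝ) - 1) * (n:ℝ) / θ * Yext m x (n-1) (r-1) else 0) := by
    by_cases hr : 1 ≤ r
    · rw [if_pos hr]
      exact sum_pt _ (fun a b => ((r:ℝ) - 1) * (n:ℝ) / θ * Yext m x a b) (n-1) (r-1)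
        (by omega) (by omega) (fun a b => by omega)
    · rw [if_neg hr]
      exact sum_pt0 _ _ (fun a b _ _ => by omega)
  have E5 : (∑ a ∈ range (m+1), ∑ b ∈ range (m+1),
      if a = n ∧ b = r then
        (-((n:ℝ) * ((n:ℝ) - 1) / θ) - ((n:ℝ) - (r:ℝ)) * v - (r:ℝ) * u) * Yext m x a b else 0)
      = (-((n:ℝ) * ((n:ℝ) - 1) / θ) - ((n:ℝ) - (r:ℝ)) * v - (r:ℝ) * u) * Yext m x n r := by
    exact sum_pt _ (fun a b =>
        (-((n:ℝ) * ((n:ℝ) - 1) / θ) - ((n:ℝ) - (r:ℝ)) * v - (r:ℝ) * u) * Yext m x a b) n r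
      (by omega) (by omega) (fun a b => by omega)
  rw [E1, E2, E3, E4, E5, RowExpr]

noncomputable def wgt (k : ℕ) : ℝ := (1/4 : ℝ)^k

lemma wgt_pos (k : ℕ) : 0 < wgt k := by unfold wgt; positivity

lemma wgt_anti {a b : ℕ} (h : a ≤ b) : wgt b ≤ wgt a :=
  pow_le_pow_of_le_one (by norm_num) (by norm_num) h

noncomputable def Df (θ u v : ℝ) (n r : ℕ) : ℝ :=
  (n:ℝ)*((n:ℝ)-1)/θ + ((n:ℝ)-(r:ℝ))*v + (r:ℝ)*u

noncomputable def Mt (θ u v : ℝ) (n r a b : ℕ) : ℝ :=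
    (if 1 ≤ r ∧ r ≤ n ∧ a = n ∧ b + 1 = r then wgt n * (((n:ℝ)-(r:ℝ)+1)*v) else 0)
  + (if r + 1 ≤ n ∧ a = n ∧ b = r + 1 then wgt n * (((r:ℝ)+1)*u) else 0)
  + (if r + 1 ≤ n ∧ a + 1 = n ∧ b = r then wgt n * (((n:ℝ)-1-(r:ℝ))*(n:ℝ)/θ) else 0)
  + (if 1 ≤ r ∧ a + 1 = n ∧ b + 1 = r then wgt n * (((r:ℝ)-1)*(n:ℝ)/θ) else 0)

lemma Mt_nonneg {θ u v : ℝ} (hθ : 0 < θ) (hu : 0 ≤ u) (hv : 0 ≤ v) (n r a b : ℕ) :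
    0 ≤ Mt θ u v n r a b := by
  unfold Mt
  have hw := (wgt_pos n).le
  refine add_nonneg (add_nonneg (add_nonneg ?_ ?_) ?_) ?_
  · split_ifs with h
    · exact mul_nonneg hw (mul_nonneg (by
        have hc : (r:ℝ) ≤ (n:ℝ) := Nat.cast_le.mpr h.2.1
        linarith) hv)
    · exact le_refl 0
  · split_ifs with h
    · exact mul_nonneg hw (mul_nonneg (by positivity) hu)
    · exact le_refl 0
  · split_ifs with h
    · have hc : (r:ℝ) + 1 ≤ (n:ℝ) := by exact_mod_cast h.1
      apply mul_nonneg hw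
      apply div_nonneg (mul_nonneg (by linarith) (by positivity)) hθ.le
    · exact le_refl 0
  · split_ifs with h
    · have hc : (1:ℝ) ≤ (r:ℝ) := by exact_mod_cast h.1
      apply mul_nonneg hw
      apply div_nonneg (mul_nonneg (by linarith) (by positivity)) hθ.le
    · exact le_refl 0

lemma Mt_row {m : ℕ} (θ u v : ℝ) (x : SmIdx m → ℝ) (n r : ℕ) (hnm : n ≤ m) (hrm : r ≤ m) :
    (∑ a ∈ range (m+1), ∑ b ∈ range (m+1), Mt θ u v n r a b * |Yext m x a b|) =
      (if 1 ≤ r ∧ r ≤ n then wgt n * (((n:ℝ)-(r:ℝ)+1)*v) * |Yext m x n (r-1)| else 0)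
    + (if r + 1 ≤ n then wgt n * (((r:ℝ)+1)*u) * |Yext m x n (r+1)| else 0)
    + (if r + 1 ≤ n then wgt n * (((n:ℝ)-1-(r:ℝ))*(n:ℝ)/θ) * |Yext m x (n-1) r| else 0)
    + (if 1 ≤ r ∧ 1 ≤ n then wgt n * (((r:ℝ)-1)*(n:ℝ)/θ) * |Yext m x (n-1) (r-1)| else 0) := by
  have expand : ∀ a b : ℕ, Mt θ u v n r a b * |Yext m x a b| =
      (if 1 ≤ r ∧ r ≤ n ∧ a = n ∧ b + 1 = r then wgt n * (((n:ℝ)-(r:ℝ)+1)*v) * |Yext m x a b| else 0)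
    + (if r + 1 ≤ n ∧ a = n ∧ b = r + 1 then wgt n * (((r:ℝ)+1)*u) * |Yext m x a b| else 0)
    + (if r + 1 ≤ n ∧ a + 1 = n ∧ b = r then wgt n * (((n:ℝ)-1-(r:ℝ))*(n:ℝ)/θ) * |Yext m x a b| else 0)
    + (if 1 ≤ r ∧ a + 1 = n ∧ b + 1 = r then wgt n * (((r:ℝ)-1)*(n:ℝ)/θ) * |Yext m x a b| else 0) := by
    intro a b
    unfold Mt
    split_ifs <;> ring
  simp only [expand, Finset.sum_add_distrib]
  have E1 : (∑ a ∈ range (m+1), ∑ b ∈ range (m+1),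
      if 1 ≤ r ∧ r ≤ n ∧ a = n ∧ b + 1 = r then wgt n * (((n:ℝ)-(r:ℝ)+1)*v) * |Yext m x a b| else 0)
      = (if 1 ≤ r ∧ r ≤ n then wgt n * (((n:ℝ)-(r:ℝ)+1)*v) * |Yext m x n (r-1)| else 0) := by
    by_cases hg : 1 ≤ r ∧ r ≤ n
    · rw [if_pos hg]
      exact sum_pt _ (fun a b => wgt n * (((n:ℝ)-(r:ℝ)+1)*v) * |Yext m x a b|) n (r-1)
        (by omega) (by omega) (fun a b => by omega)
    · rw [if_neg hg]
      exact sum_pt0 _ _ (fun a b _ _ => by omega)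
  have E2 : (∑ a ∈ range (m+1), ∑ b ∈ range (m+1),
      if r + 1 ≤ n ∧ a = n ∧ b = r + 1 then wgt n * (((r:ℝ)+1)*u) * |Yext m x a b| else 0)
      = (if r + 1 ≤ n then wgt n * (((r:ℝ)+1)*u) * |Yext m x n (r+1)| else 0) := by
    by_cases hg : r + 1 ≤ n
    · rw [if_pos hg]
      exact sum_pt _ (fun a b => wgt n * (((r:ℝ)+1)*u) * |Yext m x a b|) n (r+1)
        (by omega) (by omega) (fun a b => by omega)
    · rw [if_neg hg]
      exact sum_pt0 _ _ (fun a b _ _ => by omega)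
  have E3 : (∑ a ∈ range (m+1), ∑ b ∈ range (m+1),
      if r + 1 ≤ n ∧ a + 1 = n ∧ b = r then wgt n * (((n:ℝ)-1-(r:ℝ))*(n:ℝ)/θ) * |Yext m x a b| else 0)
      = (if r + 1 ≤ n then wgt n * (((n:ℝ)-1-(r:ℝ))*(n:ℝ)/θ) * |Yext m x (n-1) r| else 0) := by
    by_cases hg : r + 1 ≤ n
    · rw [if_pos hg]
      exact sum_pt _ (fun a b => wgt n * (((n:ℝ)-1-(r:ℝ))*(n:ℝ)/θ) * |Yext m x a b|) (n-1) r
        (by omega) (by omega) (fun a b => by omega)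
    · rw [if_neg hg]
      exact sum_pt0 _ _ (fun a b _ _ => by omega)
  have E4 : (∑ a ∈ range (m+1), ∑ b ∈ range (m+1),
      if 1 ≤ r ∧ a + 1 = n ∧ b + 1 = r then wgt n * (((r:ℝ)-1)*(n:ℝ)/θ) * |Yext m x a b| else 0)
      = (if 1 ≤ r ∧ 1 ≤ n then wgt n * (((r:ℝ)-1)*(n:ℝ)/θ) * |Yext m x (n-1) (r-1)| else 0) := by
    by_cases hg : 1 ≤ r ∧ 1 ≤ n
    · rw [if_pos hg]
      exact sum_pt _ (fun a b => wgt n * (((r:ℝ)-1)*(n:ℝ)/θ) * |Yext m x a b|) (n-1) (r-1)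
        (by omega) (by omega) (fun a b => by omega)
    · rw [if_neg hg]
      exact sum_pt0 _ _ (fun a b _ _ => by omega)
  rw [E1, E2, E3, E4]

lemma Mt_col {m : ℕ} (θ u v : ℝ) (a b : ℕ) (ha : a ≤ m) (hb : b ≤ m) :
    (∑ n ∈ range (m+1), ∑ r ∈ range (m+1), Mt θ u v n r a b) =
      (if b + 1 ≤ a then wgt a * (((a:ℝ)-((b+1:ℕ):ℝ)+1)*v) else 0)
    + (if 1 ≤ b ∧ b ≤ a then wgt a * ((((b-1:ℕ):ℝ)+1)*u) else 0)
    + (if b ≤ a ∧ a + 1 ≤ m then wgt (a+1) * ((((a+1:ℕ):ℝ)-1-(b:ℝ))*((a+1:ℕ):ℝ)/θ) else 0)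
    + (if a + 1 ≤ m ∧ b + 1 ≤ m then wgt (a+1) * ((((b+1:ℕ):ℝ)-1)*((a+1:ℕ):ℝ)/θ) else 0) := by
  unfold Mt
  simp only [Finset.sum_add_distrib]
  have E1 : (∑ n ∈ range (m+1), ∑ r ∈ range (m+1),
      if 1 ≤ r ∧ r ≤ n ∧ a = n ∧ b + 1 = r then wgt n * (((n:ℝ)-(r:ℝ)+1)*v) else 0)
      = (if b + 1 ≤ a then wgt a * (((a:ℝ)-((b+1:ℕ):ℝ)+1)*v) else 0) := by
    by_cases hg : b + 1 ≤ a
    · rw [if_pos hg]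
      exact sum_pt _ (fun n r => wgt n * (((n:ℝ)-(r:ℝ)+1)*v)) a (b+1)
        (by omega) (by omega) (fun n r => by omega)
    · rw [if_neg hg]
      exact sum_pt0 _ _ (fun n r _ _ => by omega)
  have E2 : (∑ n ∈ range (m+1), ∑ r ∈ range (m+1),
      if r + 1 ≤ n ∧ a = n ∧ b = r + 1 then wgt n * (((r:ℝ)+1)*u) else 0)
      = (if 1 ≤ b ∧ b ≤ a then wgt a * ((((b-1:ℕ):ℝ)+1)*u) else 0) := by
    by_cases hg : 1 ≤ b ∧ b ≤ a
    · rw [if_pos hg]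
      exact sum_pt _ (fun n r => wgt n * (((r:ℝ)+1)*u)) a (b-1)
        (by omega) (by omega) (fun n r => by omega)
    · rw [if_neg hg]
      exact sum_pt0 _ _ (fun n r _ _ => by omega)
  have E3 : (∑ n ∈ range (m+1), ∑ r ∈ range (m+1),
      if r + 1 ≤ n ∧ a + 1 = n ∧ b = r then wgt n * (((n:ℝ)-1-(r:ℝ))*(n:ℝ)/θ) else 0)
      = (if b ≤ a ∧ a + 1 ≤ m then wgt (a+1) * ((((a+1:ℕ):ℝ)-1-(b:ℝ))*((a+1:ℕ):ℝ)/θ) else 0) := by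
    by_cases hg : b ≤ a ∧ a + 1 ≤ m
    · rw [if_pos hg]
      exact sum_pt _ (fun n r => wgt n * (((n:ℝ)-1-(r:ℝ))*(n:ℝ)/θ)) (a+1) b
        (by omega) (by omega) (fun n r => by omega)
    · rw [if_neg hg]
      exact sum_pt0 _ _ (fun n r _ _ => by omega)
  have E4 : (∑ n ∈ range (m+1), ∑ r ∈ range (m+1),
      if 1 ≤ r ∧ a + 1 = n ∧ b + 1 = r then wgt n * (((r:ℝ)-1)*(n:ℝ)/θ) else 0)
      = (if a + 1 ≤ m ∧ b + 1 ≤ m then wgt (a+1) * ((((b+1:ℕ):ℝ)-1)*((a+1:ℕ):ℝ)/θ) else 0) := by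
    by_cases hg : a + 1 ≤ m ∧ b + 1 ≤ m
    · rw [if_pos hg]
      exact sum_pt _ (fun n r => wgt n * (((r:ℝ)-1)*(n:ℝ)/θ)) (a+1) (b+1)
        (by omega) (by omega) (fun n r => by omega)
    · rw [if_neg hg]
      exact sum_pt0 _ _ (fun n r _ _ => by omega)
  rw [E1, E2, E3, E4]

lemma col_bound {m : ℕ} {θ u v : ℝ} (hθ : 0 < θ) (hu : 0 ≤ u) (hv : 0 ≤ v)
    (a b : ℕ) (ha2 : 2 ≤ a) (ham : a ≤ m) (hba : b ≤ a) :
    (∑ n ∈ range (m+1), ∑ r ∈ range (m+1), Mt θ u v n r a b) + wgt m * (1/(2*θ))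
      ≤ wgt a * Df θ u v a b := by
  rw [Mt_col θ u v a b ham (le_trans hba ham)]
  have hA2 : (2:ℝ) ≤ (a:ℝ) := by exact_mod_cast ha2
  have hBA : (b:ℝ) ≤ (a:ℝ) := by exact_mod_cast hba
  have hwa := wgt_pos a
  have hwm := wgt_pos m
  have hwma : wgt m ≤ wgt a := wgt_anti ham
  have h1 : (if b + 1 ≤ a then wgt a * (((a:ℝ)-((b+1:ℕ):ℝ)+1)*v) else 0)
      ≤ wgt a * (((a:ℝ)-(b:ℝ))*v) := by
    split_ifs with h
    · apply le_of_eq; push_cast; ring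
    · have : (a:ℝ) = (b:ℝ) := by exact_mod_cast (by omega : a = b)
      rw [this]; simp
  have h2 : (if 1 ≤ b ∧ b ≤ a then wgt a * ((((b-1:ℕ):ℝ)+1)*u) else 0)
      ≤ wgt a * ((b:ℝ)*u) := by
    split_ifs with h
    · apply le_of_eq
      have : ((b-1:ℕ):ℝ) = (b:ℝ) - 1 := by
        have := h.1; push_cast [Nat.cast_sub this]; ring
      rw [this]; ring
    · have hb0 : b = 0 := by omega
      subst hb0
      simp [mul_nonneg hwa.le]
  have h3 : (if b ≤ a ∧ a + 1 ≤ m then wgt (a+1) * ((((a+1:ℕ):ℝ)-1-(b:ℝ))*((a+1:ℕ):ℝ)/θ) else 0)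
      ≤ wgt (a+1) * (((a:ℝ)-(b:ℝ))*((a:ℝ)+1)/θ) := by
    split_ifs with h
    · apply le_of_eq; push_cast; ring
    · apply mul_nonneg (wgt_pos _).le
      apply div_nonneg (mul_nonneg (by linarith) (by linarith)) hθ.le
  have h4 : (if a + 1 ≤ m ∧ b + 1 ≤ m then wgt (a+1) * ((((b+1:ℕ):ℝ)-1)*((a+1:ℕ):ℝ)/θ) else 0)
      ≤ wgt (a+1) * ((b:ℝ)*((a:ℝ)+1)/θ) := by
    have hbnn : (0:ℝ) ≤ (b:ℝ) := Nat.cast_nonneg b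
    split_ifs with h
    · apply le_of_eq; push_cast; ring
    · apply mul_nonneg (wgt_pos _).le
      apply div_nonneg (mul_nonneg hbnn (by linarith)) hθ.le
  have hkey : wgt (a+1) * (((a:ℝ)-(b:ℝ))*((a:ℝ)+1)/θ) + wgt (a+1) * ((b:ℝ)*((a:ℝ)+1)/θ)
      + wgt m * (1/(2*θ)) ≤ wgt a * ((a:ℝ)*((a:ℝ)-1)/θ) := by
    have hwa1 : wgt (a+1) = wgt a * (1/4) := by unfold wgt; rw [pow_succ]
    rw [hwa1]
    have hcore : wgt a * (1/4) * (((a:ℝ)-(b:ℝ))*((a:ℝ)+1)) + wgt a * (1/4) * ((b:ℝ)*((a:ℝ)+1))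
        + wgt m * (1/2) ≤ wgt a * ((a:ℝ)*((a:ℝ)-1)) := by
      nlinarith [mul_le_mul_of_nonneg_right hwma (by norm_num : (0:ℝ) ≤ 1/2),
        mul_nonneg hwa.le (mul_nonneg (by linarith : (0:ℝ) ≤ 3*(a:ℝ)+1) (by linarith : (0:ℝ) ≤ (a:ℝ)-2))]
    have hinv : (0:ℝ) ≤ θ⁻¹ := by positivity
    have := mul_le_mul_of_nonneg_right hcore hinv
    calc wgt a * (1/4) * (((a:ℝ)-(b:ℝ))*((a:ℝ)+1)/θ) + wgt a * (1/4) * ((b:ℝ)*((a:ℝ)+1)/θ)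
        + wgt m * (1/(2*θ))
        = (wgt a * (1/4) * (((a:ℝ)-(b:ℝ))*((a:ℝ)+1)) + wgt a * (1/4) * ((b:ℝ)*((a:ℝ)+1))
          + wgt m * (1/2)) * θ⁻¹ := by
          field_simp
      _ ≤ (wgt a * ((a:ℝ)*((a:ℝ)-1))) * θ⁻¹ := this
      _ = wgt a * ((a:ℝ)*((a:ℝ)-1)/θ) := by field_simp
  have hDf : wgt a * Df θ u v a b
      = wgt a * ((a:ℝ)*((a:ℝ)-1)/θ) + wgt a * (((a:ℝ)-(b:ℝ))*v) + wgt a * ((b:ℝ)*u) := by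
    unfold Df; ring
  rw [hDf]
  linarith [h1, h2, h3, h4, hkey]

lemma kerzero (m : ℕ) {θ u v : ℝ} (hθ : 0 < θ) (hu : 0 ≤ u) (hv : 0 ≤ v) (x : SmIdx m → ℝ)
    (h10 : Yext m x 1 0 = 0) (h11 : Yext m x 1 1 = 0)
    (hrows : ∀ (n r : ℕ) (h1 : 1 ≤ n) (h2 : n ≤ m) (h3 : r ≤ n), 2 ≤ n →
      (coalQ m θ u v).mulVec x (mkSt m n r h1 h2 h3) = 0) :
    x = 0 := by
  have hY0 : ∀ a b : ℕ, ¬(1 ≤ a ∧ a ≤ m ∧ b ≤ a) → Yext m x a b = 0 := fun a b h => Yext_zero x h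
  have hlvl1 : ∀ b, Yext m x 1 b = 0 := by
    intro b
    match b with
    | 0 => exact h10
    | 1 => exact h11
    | (k+2) => exact hY0 1 (k+2) (by omega)
  have hROW : ∀ n r, 2 ≤ n → n ≤ m → r ≤ n → RowExpr m θ u v x n r = 0 := by
    intro n r hn h2 h3
    rw [← mulVec_row m θ u v x n r (by omega) h2 h3]
    exact hrows n r (by omega) h2 h3 hn
  -- row bound
  have hrowb : ∀ n r, n ≤ m → r ≤ m →
      wgt n * Df θ u v n r * |Yext m x n r| ≤
      ∑ a ∈ range (m+1), ∑ b ∈ range (m+1), Mt θ u v n r a b * |Yext m x a b| := by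
    intro n r hnm hrm
    by_cases hy : Yext m x n r = 0
    · rw [hy, abs_zero, mul_zero]
      apply Finset.sum_nonneg; intro a _; apply Finset.sum_nonneg; intro b _
      exact mul_nonneg (Mt_nonneg hθ hu hv _ _ _ _) (abs_nonneg _)
    · have hval : 1 ≤ n ∧ n ≤ m ∧ r ≤ n := by by_contra h; exact hy (hY0 n r h)
      have hn1 : n ≠ 1 := fun h1 => hy (h1 ▸ hlvl1 r)
      have hn2 : 2 ≤ n := by omega
      have hrn : r ≤ n := hval.2.2
      have hcastrn : (r:ℝ) ≤ (n:ℝ) := Nat.cast_le.mpr hrn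
      have hcastn2 : (2:ℝ) ≤ (n:ℝ) := by exact_mod_cast hn2
      rw [Mt_row θ u v x n r hnm hrm]
      have hrow := hROW n r hn2 hval.2.1 hrn
      rw [RowExpr] at hrow
      set A1 := (if 1 ≤ r then ((n:ℝ) - (r:ℝ) + 1) * v * Yext m x n (r-1) else 0) with hA1def
      set A2 := ((r:ℝ) + 1) * u * Yext m x n (r+1) with hA2def
      set A3 := ((n:ℝ) - 1 - (r:ℝ)) * (n:ℝ) / θ * Yext m x (n-1) r with hA3def
      set A4 := (if 1 ≤ r then ((r:ℝ) - 1) * (n:ℝ) / θ * Yext m x (n-1) (r-1) else 0) with hA4def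
      have hDY : Df θ u v n r * Yext m x n r = A1 + A2 + A3 + A4 := by
        unfold Df; linear_combination -hrow
      have hDfnn : 0 ≤ Df θ u v n r := by
        unfold Df
        have h1 : (0:ℝ) ≤ (n:ℝ)*((n:ℝ)-1)/θ :=
          div_nonneg (mul_nonneg (by linarith) (by linarith)) hθ.le
        have h2 : (0:ℝ) ≤ ((n:ℝ)-(r:ℝ))*v := mul_nonneg (by linarith) hv
        have h3 : (0:ℝ) ≤ (r:ℝ)*u := mul_nonneg (by positivity) hu
        linarith
      have hB1 : wgt n * |A1| ≤
          (if 1 ≤ r ∧ r ≤ n then wgt n * (((n:ℝ)-(r:ℝ)+1)*v) * |Yext m x n (r-1)| else 0) := by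
        by_cases hr : 1 ≤ r
        · rw [if_pos (⟨hr, hrn⟩ : 1 ≤ r ∧ r ≤ n), hA1def, if_pos hr]
          apply le_of_eq
          rw [abs_mul, abs_of_nonneg (mul_nonneg (by linarith) hv)]
          ring
        · rw [if_neg (by omega : ¬(1 ≤ r ∧ r ≤ n)), hA1def, if_neg hr]
          simp
      have hB2 : wgt n * |A2| ≤
          (if r + 1 ≤ n then wgt n * (((r:ℝ)+1)*u) * |Yext m x n (r+1)| else 0) := by
        by_cases hr : r + 1 ≤ n
        · rw [if_pos hr, hA2def]
          apply le_of_eq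
          rw [abs_mul, abs_of_nonneg (mul_nonneg (by positivity) hu)]
          ring
        · rw [if_neg hr, hA2def, Yext_zero x (by omega : ¬(1 ≤ n ∧ n ≤ m ∧ r + 1 ≤ n))]
          simp
      have hB3 : wgt n * |A3| ≤
          (if r + 1 ≤ n then wgt n * (((n:ℝ)-1-(r:ℝ))*(n:ℝ)/θ) * |Yext m x (n-1) r| else 0) := by
        by_cases hr : r + 1 ≤ n
        · rw [if_pos hr, hA3def]
          apply le_of_eq
          have hc : (0:ℝ) ≤ ((n:ℝ)-1-(r:ℝ))*(n:ℝ)/θ := by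
            have : (r:ℝ) + 1 ≤ (n:ℝ) := by exact_mod_cast hr
            apply div_nonneg (mul_nonneg (by linarith) (by linarith)) hθ.le
          rw [abs_mul, abs_of_nonneg hc]
          ring
        · rw [if_neg hr, hA3def, Yext_zero x (by omega : ¬(1 ≤ n-1 ∧ n-1 ≤ m ∧ r ≤ n-1))]
          simp
      have hB4 : wgt n * |A4| ≤
          (if 1 ≤ r ∧ 1 ≤ n then wgt n * (((r:ℝ)-1)*(n:ℝ)/θ) * |Yext m x (n-1) (r-1)| else 0) := by
        by_cases hr : 1 ≤ r
        · rw [if_pos (⟨hr, by omega⟩ : 1 ≤ r ∧ 1 ≤ n), hA4def, if_pos hr]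
          apply le_of_eq
          have hc : (0:ℝ) ≤ ((r:ℝ)-1)*(n:ℝ)/θ := by
            have : (1:ℝ) ≤ (r:ℝ) := by exact_mod_cast hr
            apply div_nonneg (mul_nonneg (by linarith) (by linarith)) hθ.le
          rw [abs_mul, abs_of_nonneg hc]
          ring
        · rw [if_neg (by omega : ¬(1 ≤ r ∧ 1 ≤ n)), hA4def, if_neg hr]
          simp
      have habs : |A1 + A2 + A3 + A4| ≤ |A1| + |A2| + |A3| + |A4| := by
        calc |A1 + A2 + A3 + A4| ≤ |A1 + A2 + A3| + |A4| := abs_add_le _ _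
          _ ≤ (|A1 + A2| + |A3|) + |A4| := add_le_add_left (abs_add_le _ _) _
          _ ≤ ((|A1| + |A2|) + |A3|) + |A4| := by
              exact add_le_add_left (add_le_add_left (abs_add_le _ _) _) _
      have hL : wgt n * Df θ u v n r * |Yext m x n r| = wgt n * |A1 + A2 + A3 + A4| := by
        rw [← hDY, abs_mul, abs_of_nonneg hDfnn]; ring
      rw [hL]
      have hw := (wgt_pos n).le
      have hstep : wgt n * |A1 + A2 + A3 + A4| ≤ wgt n * (|A1| + |A2| + |A3| + |A4|) :=
        mul_le_mul_of_nonneg_left habs hw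
      have hexp : wgt n * (|A1| + |A2| + |A3| + |A4|)
          = wgt n * |A1| + wgt n * |A2| + wgt n * |A3| + wgt n * |A4| := by ring
      linarith [hstep, hB1, hB2, hB3, hB4, hexp.le, hexp.ge]
  -- global chain
  have step1 : (∑ n ∈ range (m+1), ∑ r ∈ range (m+1), wgt n * Df θ u v n r * |Yext m x n r|)
      ≤ ∑ n ∈ range (m+1), ∑ r ∈ range (m+1), ∑ a ∈ range (m+1), ∑ b ∈ range (m+1),
          Mt θ u v n r a b * |Yext m x a b| := by
    apply Finset.sum_le_sum; intro n hn
    apply Finset.sum_le_sum; intro r hr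
    exact hrowb n r (by have := mem_range.mp hn; omega) (by have := mem_range.mp hr; omega)
  have swap : (∑ n ∈ range (m+1), ∑ r ∈ range (m+1), ∑ a ∈ range (m+1), ∑ b ∈ range (m+1),
        Mt θ u v n r a b * |Yext m x a b|)
      = ∑ a ∈ range (m+1), ∑ b ∈ range (m+1),
          (∑ n ∈ range (m+1), ∑ r ∈ range (m+1), Mt θ u v n r a b) * |Yext m x a b| := by
    have s1 : ∀ n ∈ range (m+1),
        (∑ r ∈ range (m+1), ∑ a ∈ range (m+1), ∑ b ∈ range (m+1),
          Mt θ u v n r a b * |Yext m x a b|)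
        = ∑ a ∈ range (m+1), ∑ r ∈ range (m+1), ∑ b ∈ range (m+1),
          Mt θ u v n r a b * |Yext m x a b| := fun n _ => Finset.sum_comm
    rw [Finset.sum_congr rfl s1, Finset.sum_comm]
    apply Finset.sum_congr rfl; intro a _
    have s2 : ∀ n ∈ range (m+1),
        (∑ r ∈ range (m+1), ∑ b ∈ range (m+1), Mt θ u v n r a b * |Yext m x a b|)
        = ∑ b ∈ range (m+1), ∑ r ∈ range (m+1), Mt θ u v n r a b * |Yext m x a b| :=
      fun n _ => Finset.sum_comm
    rw [Finset.sum_congr rfl s2, Finset.sum_comm]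
    apply Finset.sum_congr rfl; intro b _
    rw [Finset.sum_mul]
    apply Finset.sum_congr rfl; intro n _
    rw [Finset.sum_mul]
  have step2 : (∑ a ∈ range (m+1), ∑ b ∈ range (m+1),
        (∑ n ∈ range (m+1), ∑ r ∈ range (m+1), Mt θ u v n r a b) * |Yext m x a b|)
      ≤ ∑ a ∈ range (m+1), ∑ b ∈ range (m+1),
          (wgt a * Df θ u v a b * |Yext m x a b| - wgt m * (1/(2*θ)) * |Yext m x a b|) := by
    apply Finset.sum_le_sum; intro a ha
    apply Finset.sum_le_sum; intro b hb
    by_cases hy : Yext m x a b = 0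
    · rw [hy, abs_zero]; simp
    · have hval : 1 ≤ a ∧ a ≤ m ∧ b ≤ a := by by_contra h; exact hy (hY0 a b h)
      have ha1 : a ≠ 1 := fun h1 => hy (h1 ▸ hlvl1 b)
      have hcb := col_bound hθ hu hv a b (by omega) hval.2.1 hval.2.2
      have habs0 : (0:ℝ) ≤ |Yext m x a b| := abs_nonneg _
      have := mul_le_mul_of_nonneg_right
        (by linarith [hcb] : (∑ n ∈ range (m+1), ∑ r ∈ range (m+1), Mt θ u v n r a b)
          ≤ wgt a * Df θ u v a b - wgt m * (1/(2*θ))) habs0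
      have heq : (wgt a * Df θ u v a b - wgt m * (1/(2*θ))) * |Yext m x a b|
          = wgt a * Df θ u v a b * |Yext m x a b| - wgt m * (1/(2*θ)) * |Yext m x a b| := by ring
      linarith [this, heq.le, heq.ge]
  have split2 : (∑ a ∈ range (m+1), ∑ b ∈ range (m+1),
        (wgt a * Df θ u v a b * |Yext m x a b| - wgt m * (1/(2*θ)) * |Yext m x a b|))
      = (∑ a ∈ range (m+1), ∑ b ∈ range (m+1), wgt a * Df θ u v a b * |Yext m x a b|)
        - wgt m * (1/(2*θ)) * (∑ a ∈ range (m+1), ∑ b ∈ range (m+1), |Yext m x a b|) := by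
    rw [Finset.mul_sum, ← Finset.sum_sub_distrib]
    apply Finset.sum_congr rfl; intro a _
    rw [Finset.mul_sum, ← Finset.sum_sub_distrib]
  have hTnn : (0:ℝ) ≤ ∑ a ∈ range (m+1), ∑ b ∈ range (m+1), |Yext m x a b| := by
    apply Finset.sum_nonneg; intro a _; apply Finset.sum_nonneg; intro b _; exact abs_nonneg _
  have hδ : (0:ℝ) < wgt m * (1/(2*θ)) := by
    apply mul_pos (wgt_pos m); positivity
  have hT0 : (∑ a ∈ range (m+1), ∑ b ∈ range (m+1), |Yext m x a b|) = 0 := by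
    have hchain := le_trans step1 (le_trans swap.le (le_trans step2 split2.le))
    nlinarith [hchain, hTnn, hδ]
  have hYall : ∀ a ∈ range (m+1), ∀ b ∈ range (m+1), |Yext m x a b| = 0 := by
    intro a ha b hb
    have h1 := (Finset.sum_eq_zero_iff_of_nonneg (fun a _ => Finset.sum_nonneg
      (fun b _ => abs_nonneg (Yext m x a b)))).mp hT0 a ha
    exact (Finset.sum_eq_zero_iff_of_nonneg (fun b _ => abs_nonneg _)).mp h1 b hb
  funext p
  show x p = 0
  rw [← Yext_eq x p]
  have h1 : ((p.1.1 : ℕ)) ∈ range (m+1) := mem_range.mpr p.1.1.isLt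
  have h2 : ((p.1.2 : ℕ)) ∈ range (m+1) := mem_range.mpr p.1.2.isLt
  exact abs_eq_zero.mp (hYall _ h1 _ h2)

lemma st_ne (m : ℕ) (hm : 1 ≤ m) : st10 m hm ≠ st11 m hm := by
  intro h
  have := congrArg (fun s : SmIdx m => (s.1.2 : ℕ)) h
  simp [st10, st11] at this

lemma Yext_10 {m : ℕ} (hm : 1 ≤ m) (x : SmIdx m → ℝ) : Yext m x 1 0 = x (st10 m hm) :=
  Yext_eq x (st10 m hm)

lemma Yext_11 {m : ℕ} (hm : 1 ≤ m) (x : SmIdx m → ℝ) : Yext m x 1 1 = x (st11 m hm) :=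
  Yext_eq x (st11 m hm)

lemma row10 (m : ℕ) (hm : 1 ≤ m) (θ u v : ℝ) (x : SmIdx m → ℝ) :
    (coalQ m θ u v).mulVec x (st10 m hm)
      = u * Yext m x 1 1 - v * Yext m x 1 0 := by
  have h : st10 m hm = mkSt m 1 0 (le_refl 1) hm (Nat.zero_le 1) := rfl
  rw [h, mulVec_row m θ u v x 1 0 (le_refl 1) hm (Nat.zero_le 1), RowExpr]
  norm_num
  ring

lemma row11 (m : ℕ) (hm : 1 ≤ m) (θ u v : ℝ) (x : SmIdx m → ℝ) :
    (coalQ m θ u v).mulVec x (st11 m hm)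
      = v * Yext m x 1 0 - u * Yext m x 1 1 := by
  have h : st11 m hm = mkSt m 1 1 (le_refl 1) hm (le_refl 1) := rfl
  rw [h, mulVec_row m θ u v x 1 1 (le_refl 1) hm (le_refl 1), RowExpr]
  rw [Yext_zero x (by omega : ¬(1 ≤ 0 ∧ 0 ≤ m ∧ 1 ≤ 0)),
    Yext_zero x (by omega : ¬(1 ≤ 1 ∧ 1 ≤ m ∧ 2 ≤ 1))]
  norm_num
  ring

noncomputable def Qmod (m : ℕ) (hm : 1 ≤ m) (θ u v : ℝ) : Matrix (SmIdx m) (SmIdx m) ℝ :=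
  fun p q =>
    if p = st10 m hm then (if q = st10 m hm ∨ q = st11 m hm then 1 else 0)
    else coalQ m θ u v p q

lemma Qmod_row10 (m : ℕ) (hm : 1 ≤ m) (θ u v : ℝ) (x : SmIdx m → ℝ) :
    (Qmod m hm θ u v).mulVec x (st10 m hm) = x (st10 m hm) + x (st11 m hm) := by
  show (∑ q : SmIdx m, Qmod m hm θ u v (st10 m hm) q * x q) = _
  have hexp : ∀ q : SmIdx m, Qmod m hm θ u v (st10 m hm) q * x q
      = (if q = st10 m hm then x q else 0) + (if q = st11 m hm then x q else 0) := by
    intro q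
    unfold Qmod
    rw [if_pos rfl]
    by_cases h1 : q = st10 m hm
    · subst h1
      rw [if_pos (Or.inl rfl), one_mul, if_pos rfl, if_neg (st_ne m hm), add_zero]
    · by_cases h2 : q = st11 m hm
      · subst h2
        rw [if_pos (Or.inr rfl), one_mul, if_neg h1, if_pos rfl, zero_add]
      · rw [if_neg (by tauto), if_neg h1, if_neg h2, zero_mul, add_zero]
  simp only [hexp, Finset.sum_add_distrib]
  rw [Finset.sum_ite_eq' univ (st10 m hm) x, Finset.sum_ite_eq' univ (st11 m hm) x]
  simp

lemma Qmod_row_ne (m : ℕ) (hm : 1 ≤ m) (θ u v : ℝ) (x : SmIdx m → ℝ) (p : SmIdx m)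
    (hp : p ≠ st10 m hm) :
    (Qmod m hm θ u v).mulVec x p = (coalQ m θ u v).mulVec x p := by
  show (∑ q : SmIdx m, Qmod m hm θ u v p q * x q) = ∑ q : SmIdx m, coalQ m θ u v p q * x q
  apply Finset.sum_congr rfl
  intro q _
  unfold Qmod
  rw [if_neg hp]

lemma mkSt_ne_st10 (m : ℕ) (hm : 1 ≤ m) (n r : ℕ) (h1 : 1 ≤ n) (h2 : n ≤ m) (h3 : r ≤ n)
    (hn : 2 ≤ n) : mkSt m n r h1 h2 h3 ≠ st10 m hm := by
  intro h
  have := congrArg (fun s : SmIdx m => (s.1.1 : ℕ)) h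
  simp [mkSt, st10] at this
  omega

set_option maxHeartbeats 1000000 in
/-- If `u + v > 0`, there is exactly one vector `x ∈ ℝ^{S_m}` with `Q x = 0` and the
normalization `x_{(1,0)} + x_{(1,1)} = 1`. -/
theorem stmt6 (m : ℕ) (hm : 1 ≤ m) (θ u v : ℝ) (hθ : 0 < θ) (hu : 0 ≤ u) (hv : 0 ≤ v)
    (huv : 0 < u + v) :
    ∃! x : SmIdx m → ℝ,
      (coalQ m θ u v).mulVec x = 0 ∧ x (st10 m hm) + x (st11 m hm) = 1 := by
  classical
  -- injectivity of the modified matrix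
  have hinj : ∀ x : SmIdx m → ℝ, (Qmod m hm θ u v).mulVec x = 0 → x = 0 := by
    intro x hx
    have hnorm : x (st10 m hm) + x (st11 m hm) = 0 := by
      rw [← Qmod_row10 m hm θ u v x]; exact congrFun hx _
    have hQrows : ∀ p : SmIdx m, p ≠ st10 m hm → (coalQ m θ u v).mulVec x p = 0 := by
      intro p hp
      rw [← Qmod_row_ne m hm θ u v x p hp]
      exact congrFun hx p
    have h11r := hQrows (st11 m hm) (Ne.symm (st_ne m hm))
    rw [row11 m hm θ u v x] at h11r
    rw [Yext_10 hm x, Yext_11 hm x] at h11r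
    have h10z : x (st10 m hm) = 0 := by
      have hsum : (u + v) * x (st10 m hm) = 0 := by linear_combination h11r + u * hnorm
      rcases mul_eq_zero.mp hsum with h | h
      · exact absurd h (ne_of_gt huv)
      · exact h
    have h11z : x (st11 m hm) = 0 := by linarith
    apply kerzero m hθ hu hv x
    · rw [Yext_10 hm x]; exact h10z
    · rw [Yext_11 hm x]; exact h11z
    · intro n r h1 h2 h3 hn
      exact hQrows _ (mkSt_ne_st10 m hm n r h1 h2 h3 hn)
  -- bijectivity
  set L := Matrix.mulVecLin (Qmod m hm θ u v) with hL
  have hinjL : Function.Injective L := by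
    rw [← LinearMap.ker_eq_bot]
    rw [LinearMap.ker_eq_bot']
    intro x hx
    exact hinj x hx
  have hsurjL : Function.Surjective L := LinearMap.injective_iff_surjective.mp hinjL
  obtain ⟨x₀, hx₀⟩ := hsurjL (fun p => if p = st10 m hm then (1:ℝ) else 0)
  have hx₀' : (Qmod m hm θ u v).mulVec x₀ = fun p => if p = st10 m hm then (1:ℝ) else 0 := hx₀
  -- equivalence
  have equivB : ∀ x : SmIdx m → ℝ,
      (Qmod m hm θ u v).mulVec x = (fun p => if p = st10 m hm then (1:ℝ) else 0)
      ↔ ((coalQ m θ u v).mulVec x = 0 ∧ x (st10 m hm) + x (st11 m hm) = 1) := by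
    intro x
    constructor
    · intro h
      have hnorm : x (st10 m hm) + x (st11 m hm) = 1 := by
        rw [← Qmod_row10 m hm θ u v x]
        rw [h]; simp
      have hrows : ∀ p : SmIdx m, p ≠ st10 m hm → (coalQ m θ u v).mulVec x p = 0 := by
        intro p hp
        rw [← Qmod_row_ne m hm θ u v x p hp, h]
        simp [hp]
      refine ⟨funext fun p => ?_, hnorm⟩
      by_cases hp : p = st10 m hm
      · subst hp
        have h11r := hrows (st11 m hm) (Ne.symm (st_ne m hm))
        rw [row11 m hm θ u v x] at h11r
        rw [row10 m hm θ u v x]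
        show u * Yext m x 1 1 - v * Yext m x 1 0 = 0
        linarith
      · rw [hrows p hp]; rfl
    · rintro ⟨hQ, hnorm⟩
      funext p
      by_cases hp : p = st10 m hm
      · subst hp
        rw [Qmod_row10 m hm θ u v x, hnorm]
        simp
      · rw [Qmod_row_ne m hm θ u v x p hp, congrFun hQ p]
        simp [hp]
  refine ⟨x₀, (equivB x₀).mp hx₀', ?_⟩
  intro y hy
  have hy' : L y = L x₀ := by
    show (Qmod m hm θ u v).mulVec y = (Qmod m hm θ u v).mulVec x₀
    rw [(equivB y).mpr hy, hx₀']
  exact hinjL hy'
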